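/- Fix r ≥ 2. Let φ be an instance of 2-Clause 3-SAT and G(φ) the graph of the r-coloring-number reduction (clause vertices u_i, literal pairs v_j v'_j, (r−1)-subdivided edges from clause vertices to their literals, and a 7-clique w_1,…,w_7 attached as specified). If col_r(G(φ)) ≤ 6, then φ has a satisfying assignment; specifically, the assignment setting x_j true iff v_j <_σ v'_j for a witnessing order σ satisfies φ. -/

import Mathlib

open SimpleGraph

variable {V : Type*}

/-- The strict order relation of a linear order. -/
def olt (σ : LinearOrder V) (a b : V) : Prop := σ.lt a b

/-- The set of vertices `r`-reachable from `u` with respect to `σ`: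
vertices `v >_σ u` joined to `u` by a path of length at most `r`
whose internal vertices all precede `u` in `σ`. -/
def reachSet (G : SimpleGraph V) (σ : LinearOrder V) (r : ℕ) (u : V) : Set V :=
  {v | olt σ u v ∧ ∃ p : G.Walk u v, p.IsPath ∧ p.length ≤ r ∧
    ∀ w ∈ p.support, w ≠ u → w ≠ v → olt σ w u}

/-- The set of vertices weakly `r`-reachable from `u` with respect to `σ`:
vertices `v >_σ u` joined to `u` by a path of length at most `r`
whose internal vertices all precede `v` in `σ`. -/
def wreachSet (G : SimpleGraph V) (σ : LinearOrder V) (r : ℕ) (u : V) : Set V :=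
  {v | olt σ u v ∧ ∃ p : G.Walk u v, p.IsPath ∧ p.length ≤ r ∧
    ∀ w ∈ p.support, w ≠ u → w ≠ v → olt σ w v}

/-- `col_r(G_σ)`: the maximum `r`-reach over all vertices. -/
noncomputable def colOrd [Fintype V] (G : SimpleGraph V) (σ : LinearOrder V) (r : ℕ) : ℕ :=
  Finset.univ.sup fun u => (reachSet G σ r u).ncard

/-- `wcol_r(G_σ)`: the maximum weak `r`-reach over all vertices. -/
noncomputable def wcolOrd [Fintype V] (G : SimpleGraph V) (σ : LinearOrder V) (r : ℕ) : ℕ :=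
  Finset.univ.sup fun u => (wreachSet G σ r u).ncard

/-- The `r`-coloring number of `G`. -/
noncomputable def colNum [Fintype V] (G : SimpleGraph V) (r : ℕ) : ℕ :=
  ⨅ σ : LinearOrder V, colOrd G σ r

/-- The weak `r`-coloring number of `G`. -/
noncomputable def wcolNum [Fintype V] (G : SimpleGraph V) (r : ℕ) : ℕ :=
  ⨅ σ : LinearOrder V, wcolOrd G σ r

/-- `p` is an `r`-qualifying path from `u` with respect to the (possibly partial)
order `lt`: a path of length at most `r` ending at a vertex `v` with `v ≠ u`,
`v` not `<` `u`, all of whose internal vertices are `< u`. -/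
def IsQual (G : SimpleGraph V) (lt : V → V → Prop) (r : ℕ) {u v : V} (p : G.Walk u v) : Prop :=
  p.IsPath ∧ p.length ≤ r ∧ v ≠ u ∧ ¬ lt v u ∧ ∀ w ∈ p.support, w ≠ u → w ≠ v → lt w u

/-- The `r`-backconnectivity of `u`: the maximum number of `r`-qualifying paths from `u`
that are pairwise vertex-disjoint apart from `u`. -/
noncomputable def bcon (G : SimpleGraph V) (lt : V → V → Prop) (r : ℕ) (u : V) : ℕ :=
  sSup {n | ∃ f : Fin n → (v : V) × G.Walk u v,
    (∀ i, IsQual G lt r (f i).2) ∧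
    ∀ i j : Fin n, i ≠ j → ∀ w, w ∈ (f i).2.support → w ∈ (f j).2.support → w = u}

/-- A shortest `r`-qualifying path: an `r`-qualifying `u`–`v` path of length `ℓ` such that
there is no `(ℓ-1)`-qualifying `u`–`v` path. -/
def IsShortQual (G : SimpleGraph V) (lt : V → V → Prop) (r : ℕ) {u v : V} (p : G.Walk u v) :
    Prop :=
  IsQual G lt r p ∧ ¬ ∃ q : G.Walk u v, IsQual G lt (p.length - 1) q

/-- The estimated `r`-backconnectivity of `u`: the maximum number of shortest
`r`-qualifying paths from `u` that are pairwise vertex-disjoint apart from `u`. -/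
noncomputable def est (G : SimpleGraph V) (lt : V → V → Prop) (r : ℕ) (u : V) : ℕ :=
  sSup {n | ∃ f : Fin n → (v : V) × G.Walk u v,
    (∀ i, IsShortQual G lt r (f i).2) ∧
    ∀ i j : Fin n, i ≠ j → ∀ w, w ∈ (f i).2.support → w ∈ (f j).2.support → w = u}

/-- The `r`-admissibility of `G`. -/
noncomputable def admNum [Fintype V] (G : SimpleGraph V) (r : ℕ) : ℕ :=
  ⨅ σ : LinearOrder V, Finset.univ.sup fun u => bcon G (olt σ) r u

/-- `d_v(u, G_σ)`: the least `i` such that `v` is `i`-reachable from `u`. -/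
noncomputable def dval (G : SimpleGraph V) (σ : LinearOrder V) (u v : V) : ℕ :=
  sInf {i | v ∈ reachSet G σ i u}


/-- An instance of 2-Clause 3-SAT: a CNF formula where every clause has at most 3
(distinct) variables, no clause repeats a variable, every clause has at least 2 literals
(single-literal clauses are assumed preprocessed), and each literal (a variable together
with a polarity) appears in exactly 2 clauses. -/
structure TC3SAT where
  n : ℕ
  m : ℕ
  clauses : Fin m → Finset (Fin n × Bool)
  vars_distinct : ∀ i, ∀ l ∈ clauses i, ∀ l' ∈ clauses i, l.1 = l'.1 → l = l'
  clause_le_three : ∀ i, (clauses i).card ≤ 3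
  clause_ge_two : ∀ i, 2 ≤ (clauses i).card
  lit_twice : ∀ l : Fin n × Bool, (Finset.univ.filter fun i => l ∈ clauses i).card = 2

/-- The assignment `A` satisfies the formula `φ`. -/
def TC3SAT.Sat (φ : TC3SAT) (A : Fin φ.n → Bool) : Prop :=
  ∀ i, ∃ l ∈ φ.clauses i, A l.1 = l.2

/-- The formula `φ` is satisfiable. -/
def TC3SAT.Satisfiable (φ : TC3SAT) : Prop := ∃ A, φ.Sat A

/-- Vertices of the `r`-coloring-number reduction graph `G(φ)`: one clause vertex `u i`
per clause, a pair of literal vertices per variable (`v j true` is `v_j`, `v j false` is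
`v'_j`), seven clique vertices `w 0, …, w 6` (representing `w_1, …, w_7`), and for each
occurrence `occ` of a literal in a clause, the `r - 1` internal vertices `s occ t` of the
`(r-1)`-subdivided edge between the clause vertex and the literal vertex. -/
inductive VtxC (r : ℕ) (φ : TC3SAT) where
  | u (i : Fin φ.m)
  | v (j : Fin φ.n) (b : Bool)
  | w (t : Fin 7)
  | s (occ : Σ i : Fin φ.m, {l : Fin φ.n × Bool // l ∈ φ.clauses i}) (t : Fin (r - 1))
  deriving DecidableEq, Fintype

/-- Base relation of the reduction graph: the subdivided edges are realized as paths
`u — s 0 — ⋯ — s (r-2) — v`; `w 0, …, w 6` form a clique; each clause vertex is joined to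
`w 0, …, w 3` (and to `w 4` if its clause has only 2 literals); each positive literal
vertex `v_j` is joined to `w 1, w 2, w 3` and each negative literal vertex `v'_j` to
`w 4, w 5, w 6`. -/
def relC (r : ℕ) (φ : TC3SAT) : VtxC r φ → VtxC r φ → Prop
  | .u i, .s occ t => occ.1 = i ∧ (t : ℕ) = 0
  | .s occ t, .s occ' t' => occ = occ' ∧ (t' : ℕ) = (t : ℕ) + 1
  | .s occ t, .v j b => occ.2.1 = (j, b) ∧ (t : ℕ) + 1 = r - 1
  | .v j _, .v j' _ => j = j'
  | .w _, .w _ => True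
  | .u i, .w t => (t : ℕ) ≤ 3 ∨ ((t : ℕ) = 4 ∧ (φ.clauses i).card = 2)
  | .v _ b, .w t =>
      (b = true ∧ 1 ≤ (t : ℕ) ∧ (t : ℕ) ≤ 3) ∨ (b = false ∧ 4 ≤ (t : ℕ) ∧ (t : ℕ) ≤ 6)
  | _, _ => False

/-- The reduction graph `G(φ)` for the `r`-coloring number. -/
def GC (r : ℕ) (φ : TC3SAT) : SimpleGraph (VtxC r φ) := SimpleGraph.fromRel (relC r φ)

namespace Aux

variable {r : ℕ} {φ : TC3SAT}

abbrev Occ (r : ℕ) (φ : TC3SAT) := Σ i : Fin φ.m, {l : Fin φ.n × Bool // l ∈ φ.clauses i}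

lemma gc_adj {a b : VtxC r φ} : (GC r φ).Adj a b ↔ a ≠ b ∧ (relC r φ a b ∨ relC r φ b a) :=
  SimpleGraph.fromRel_adj _ a b

lemma adj_ww {t t' : Fin 7} (h : t ≠ t') : (GC r φ).Adj (.w t) (.w t') := by
  rw [gc_adj]
  exact ⟨by simpa using h, Or.inl trivial⟩

lemma adj_uw {i : Fin φ.m} {t : Fin 7}
    (h : (t : ℕ) ≤ 3 ∨ ((t : ℕ) = 4 ∧ (φ.clauses i).card = 2)) :
    (GC r φ).Adj (.u i) (.w t) := by
  rw [gc_adj]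
  exact ⟨by simp, Or.inl h⟩

lemma adj_vw {j : Fin φ.n} {b : Bool} {t : Fin 7}
    (h : (b = true ∧ 1 ≤ (t : ℕ) ∧ (t : ℕ) ≤ 3) ∨ (b = false ∧ 4 ≤ (t : ℕ) ∧ (t : ℕ) ≤ 6)) :
    (GC r φ).Adj (.v j b) (.w t) := by
  rw [gc_adj]
  exact ⟨by simp, Or.inl h⟩

lemma adj_vv {j : Fin φ.n} {b b' : Bool} (h : b ≠ b') :
    (GC r φ).Adj (.v j b) (.v j b') := by
  rw [gc_adj]
  exact ⟨by simpa using h, Or.inl rfl⟩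

lemma adj_vw_iff {j : Fin φ.n} {b : Bool} {t : Fin 7} :
    (GC r φ).Adj (.v j b) (.w t) ↔
      ((b = true ∧ 1 ≤ (t : ℕ) ∧ (t : ℕ) ≤ 3) ∨ (b = false ∧ 4 ≤ (t : ℕ) ∧ (t : ℕ) ≤ 6)) := by
  rw [gc_adj]
  constructor
  · rintro ⟨-, h | h⟩
    · exact h
    · exact h.elim
  · intro h
    exact ⟨by simp, Or.inl h⟩

/-- The `t`-th vertex on the subdivided path of occurrence `occ`,
`t = 0` is the clause vertex, `t = r` the literal vertex. -/
def Q (occ : Occ r φ) (t : ℕ) : VtxC r φ :=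
  if h : 1 ≤ t ∧ t ≤ r - 1 then .s occ ⟨t - 1, by omega⟩
  else if t = 0 then .u occ.1 else .v occ.2.1.1 occ.2.1.2

lemma Q_zero (occ : Occ r φ) : Q occ 0 = .u occ.1 := by simp [Q]

lemma Q_last (hr : 2 ≤ r) (occ : Occ r φ) : Q occ r = .v occ.2.1.1 occ.2.1.2 := by
  have h1 : ¬ (1 ≤ r ∧ r ≤ r - 1) := by omega
  have h2 : r ≠ 0 := by omega
  simp [Q, h1, h2]

lemma Q_mid (occ : Occ r φ) {t : ℕ} (h1 : 1 ≤ t) (h2 : t ≤ r - 1) :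
    Q occ t = .s occ ⟨t - 1, by omega⟩ := by
  simp [Q, h1, h2]

lemma Q_ne_w (occ : Occ r φ) (t : ℕ) (a : Fin 7) : Q occ t ≠ .w a := by
  unfold Q
  split
  · simp
  · split <;> simp

lemma Q_big (occ : Occ r φ) {t : ℕ} (h1 : 1 ≤ t) (h2 : ¬ t ≤ r - 1) :
    Q occ t = .v occ.2.1.1 occ.2.1.2 := by
  have hc : ¬ (1 ≤ t ∧ t ≤ r - 1) := by omega
  have h0 : ¬ t = 0 := by omega
  simp [Q, hc, h0]

lemma Q_adj (hr : 2 ≤ r) (occ : Occ r φ) {t : ℕ} (ht : t < r) :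
    (GC r φ).Adj (Q occ t) (Q occ (t + 1)) := by
  rcases Nat.lt_or_ge t 1 with h0 | h1
  · have ht0 : t = 0 := by omega
    subst ht0
    rw [Q_zero, Q_mid occ (by omega) (by omega)]
    rw [gc_adj]
    exact ⟨by simp, Or.inl ⟨rfl, rfl⟩⟩
  · rcases Nat.lt_or_ge t (r - 1) with h2 | h2
    · rw [Q_mid occ h1 (by omega), Q_mid occ (by omega) (by omega)]
      rw [gc_adj]
      refine ⟨?_, Or.inl ⟨rfl, show t + 1 - 1 = t - 1 + 1 by omega⟩⟩
      simp only [ne_eq, VtxC.s.injEq, heq_eq_eq, true_and, Fin.mk.injEq]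
      omega
    · have ht1 : t = r - 1 := by omega
      subst ht1
      have hr1 : r - 1 + 1 = r := by omega
      rw [Q_mid occ h1 le_rfl, hr1, Q_last hr]
      rw [gc_adj]
      exact ⟨by simp, Or.inl ⟨Prod.ext rfl rfl, show r - 1 - 1 + 1 = r - 1 by omega⟩⟩

lemma Q_inj (hr : 2 ≤ r) (occ : Occ r φ) {t t' : ℕ} (ht : t ≤ r) (ht' : t' ≤ r)
    (h : Q occ t = Q occ t') : t = t' := by
  by_cases a1 : 1 ≤ t ∧ t ≤ r - 1 <;> by_cases a2 : 1 ≤ t' ∧ t' ≤ r - 1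
  · rw [Q_mid occ a1.1 a1.2, Q_mid occ a2.1 a2.2] at h
    simp only [VtxC.s.injEq, heq_eq_eq, true_and, Fin.mk.injEq] at h
    omega
  · have h2 : t' = 0 ∨ t' = r := by omega
    rw [Q_mid occ a1.1 a1.2] at h
    rcases h2 with rfl | rfl
    · rw [Q_zero] at h; exact absurd h (by simp)
    · rw [Q_last hr] at h; exact absurd h (by simp)
  · have h2 : t = 0 ∨ t = r := by omega
    rw [Q_mid occ a2.1 a2.2] at h
    rcases h2 with rfl | rfl
    · rw [Q_zero] at h; exact absurd h (by simp)
    · rw [Q_last hr] at h; exact absurd h (by simp)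
  · have h2 : t = 0 ∨ t = r := by omega
    have h2' : t' = 0 ∨ t' = r := by omega
    rcases h2 with rfl | rfl <;> rcases h2' with rfl | rfl
    · rfl
    · rw [Q_zero, Q_last hr] at h; exact absurd h (by simp)
    · rw [Q_zero, Q_last hr] at h; exact absurd h (by simp)
    · rfl

lemma Q_injO (hr : 2 ≤ r) {occ occ' : Occ r φ} (hocc : occ.1 = occ'.1) {t t' : ℕ}
    (h1 : 1 ≤ t) (h1' : 1 ≤ t')
    (h : Q occ t = Q occ' t') : occ = occ' := by
  by_cases a1 : t ≤ r - 1 <;> by_cases a2 : t' ≤ r - 1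
  · rw [Q_mid occ h1 a1, Q_mid occ' h1' a2] at h
    simp only [VtxC.s.injEq] at h
    exact h.1
  · rw [Q_mid occ h1 a1, Q_big occ' h1' a2] at h
    exact absurd h (by simp)
  · rw [Q_big occ h1 a1, Q_mid occ' h1' a2] at h
    exact absurd h (by simp)
  · rw [Q_big occ h1 a1, Q_big occ' h1' a2] at h
    simp only [VtxC.v.injEq] at h
    rcases occ with ⟨i, ⟨l, hl⟩⟩
    rcases occ' with ⟨i', ⟨l', hl'⟩⟩
    simp only at hocc h
    subst hocc
    have : l = l' := Prod.ext h.1 h.2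
    subst this
    rfl

lemma exists_walkQ (hr : 2 ≤ r) (occ : Occ r φ) (a : ℕ) :
    ∀ b : ℕ, a ≤ b → b ≤ r →
    ∃ p : (GC r φ).Walk (Q occ a) (Q occ b), p.length = b - a ∧
      p.support = (List.range' a (b - a + 1)).map (Q occ) := by
  intro b
  induction b with
  | zero =>
    intro hab _
    have : a = 0 := by omega
    subst this
    exact ⟨SimpleGraph.Walk.nil, by simp, by simp⟩
  | succ b ih =>
    intro hab hbr
    by_cases h : a = b + 1
    · subst h
      exact ⟨SimpleGraph.Walk.nil, by simp, by simp⟩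
    · have hab' : a ≤ b := by omega
      obtain ⟨p, hlen, hsup⟩ := ih hab' (by omega)
      refine ⟨p.concat (Q_adj hr occ (show b < r by omega)), ?_, ?_⟩
      · rw [SimpleGraph.Walk.length_concat]; omega
      · have hrange : List.range' a (b + 1 - a + 1) = List.range' a (b - a + 1) ++ [b + 1] := by
          have h1 : b + 1 - a + 1 = (b - a + 1) + 1 := by omega
          rw [h1, List.range'_concat]
          congr 2
          omega
        rw [SimpleGraph.Walk.support_concat, hsup, hrange, List.map_append]
        simp [List.concat_eq_append]

/-- A path-walk on `Q occ` from `a` to `b` whose support is exactly `{Q t : a ≤ t ≤ b}`. -/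
lemma exists_pathQ (hr : 2 ≤ r) (occ : Occ r φ) {a b : ℕ} (hab : a ≤ b) (hbr : b ≤ r) :
    ∃ p : (GC r φ).Walk (Q occ a) (Q occ b), p.IsPath ∧ p.length = b - a ∧
      (∀ x, x ∈ p.support ↔ ∃ t, a ≤ t ∧ t ≤ b ∧ x = Q occ t) := by
  obtain ⟨p, hlen, hsup⟩ := exists_walkQ hr occ a b hab hbr
  refine ⟨p, ?_, hlen, ?_⟩
  · rw [SimpleGraph.Walk.isPath_def, hsup]
    refine List.Nodup.map_on ?_ (List.nodup_range' (s := a) (n := b - a + 1))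
    intro t ht t' ht' hq
    rw [List.mem_range'_1] at ht ht'
    exact Q_inj hr occ (by omega) (by omega) hq
  · intro x
    rw [hsup, List.mem_map]
    constructor
    · rintro ⟨t, ht, rfl⟩
      rw [List.mem_range'_1] at ht
      exact ⟨t, by omega, by omega, rfl⟩
    · rintro ⟨t, ht1, ht2, rfl⟩
      exact ⟨t, by rw [List.mem_range'_1]; omega, rfl⟩

lemma mem_reachSet {G : SimpleGraph V} {σ : LinearOrder V} {k : ℕ} {z x : V}
    (hlt : olt σ z x) (p : G.Walk z x) (hp : p.IsPath) (hl : p.length ≤ k)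
    (hint : ∀ y ∈ p.support, y ≠ z → y ≠ x → olt σ y z) :
    x ∈ reachSet G σ k z :=
  ⟨hlt, p, hp, hl, hint⟩

/-- One-edge reach. -/
lemma mem_reachSet_adj {G : SimpleGraph V} {σ : LinearOrder V} {k : ℕ} (hk : 1 ≤ k) {z x : V}
    (hlt : olt σ z x) (ha : G.Adj z x) : x ∈ reachSet G σ k z := by
  refine ⟨hlt, SimpleGraph.Walk.cons ha SimpleGraph.Walk.nil, ?_, by simp; omega, ?_⟩
  · rw [SimpleGraph.Walk.isPath_def]
    simp [ha.ne]
  · intro y hy hy1 hy2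
    simp [SimpleGraph.Walk.support_cons] at hy
    rcases hy with rfl | rfl
    · exact absurd rfl hy1
    · exact absurd rfl hy2

/-- Two-edge reach through a smaller vertex. -/
lemma mem_reachSet_two {G : SimpleGraph V} {σ : LinearOrder V} {k : ℕ} (hk : 2 ≤ k) {z m x : V}
    (hlt : olt σ z x) (hmz : olt σ m z) (h1 : G.Adj z m) (h2 : G.Adj m x) (hzx : z ≠ x) :
    x ∈ reachSet G σ k z := by
  refine ⟨hlt, SimpleGraph.Walk.cons h1 (SimpleGraph.Walk.cons h2 SimpleGraph.Walk.nil),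
    ?_, by simp; omega, ?_⟩
  · rw [SimpleGraph.Walk.isPath_def]
    simp [h1.ne, h2.ne, hzx]
  · intro y hy hy1 hy2
    simp [SimpleGraph.Walk.support_cons] at hy
    rcases hy with rfl | rfl | rfl
    · exact absurd rfl hy1
    · exact hmz
    · exact absurd rfl hy2

lemma reach_card_le {G : SimpleGraph (VtxC r φ)} {σ : LinearOrder (VtxC r φ)}
    (hσ : colOrd G σ r ≤ 6) (z : VtxC r φ) : (reachSet G σ r z).ncard ≤ 6 :=
  le_trans (Finset.le_sup (f := fun u => (reachSet G σ r u).ncard) (Finset.mem_univ z)) hσ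

lemma no_seven {G : SimpleGraph (VtxC r φ)} {σ : LinearOrder (VtxC r φ)}
    (hσ : colOrd G σ r ≤ 6) (z : VtxC r φ) (f : Fin 7 → VtxC r φ)
    (hinj : Function.Injective f) (hmem : ∀ k, f k ∈ reachSet G σ r z) : False := by
  have h7 : ((Finset.univ.image f : Finset (VtxC r φ)) : Set (VtxC r φ)).ncard = 7 := by
    rw [Set.ncard_coe_finset, Finset.card_image_of_injective _ hinj]
    simp
  have hsub : ((Finset.univ.image f : Finset (VtxC r φ)) : Set (VtxC r φ)) ⊆ reachSet G σ r z := by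
    intro x hx
    simp only [Finset.coe_image, Finset.coe_univ, Set.image_univ, Set.mem_range] at hx
    obtain ⟨k, rfl⟩ := hx
    exact hmem k
  have := Set.ncard_le_ncard hsub (Set.toFinite _)
  rw [h7] at this
  have := le_trans this (reach_card_le hσ z)
  omega

lemma olt_resolve (σ : LinearOrder V) {a b : V} (hne : a ≠ b) (h : ¬ olt σ a b) :
    olt σ b a := by
  letI := σ
  rcases lt_trichotomy a b with h1 | h1 | h1
  · exact absurd h1 h
  · exact absurd h1 hne
  · exact h1

lemma olt_trans (σ : LinearOrder V) {a b c : V} (h1 : olt σ a b) (h2 : olt σ b c) :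
    olt σ a c := by
  letI := σ
  exact lt_trans h1 h2

lemma exists_min_w (σ : LinearOrder (VtxC r φ)) :
    ∃ t0 : Fin 7, ∀ t, t ≠ t0 → olt σ (VtxC.w t0) (VtxC.w t) := by
  letI := σ
  obtain ⟨t0, -, hm⟩ := Finset.exists_min_image (Finset.univ : Finset (Fin 7))
    (fun t => (VtxC.w t : VtxC r φ)) ⟨0, Finset.mem_univ 0⟩
  refine ⟨t0, fun t ht => ?_⟩
  have h1 : (VtxC.w t0 : VtxC r φ) ≤ VtxC.w t := hm t (Finset.mem_univ t)
  have h2 : (VtxC.w t0 : VtxC r φ) ≠ VtxC.w t := by simp [ht.symm]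
  exact lt_of_le_of_ne h1 h2

lemma no_seven7 {σ : LinearOrder (VtxC r φ)} (hσ : colOrd (GC r φ) σ r ≤ 6)
    (z a0 a1 a2 a3 a4 a5 a6 : VtxC r φ)
    (h01 : a0 ≠ a1) (h02 : a0 ≠ a2) (h03 : a0 ≠ a3) (h04 : a0 ≠ a4) (h05 : a0 ≠ a5)
    (h06 : a0 ≠ a6) (h12 : a1 ≠ a2) (h13 : a1 ≠ a3) (h14 : a1 ≠ a4) (h15 : a1 ≠ a5)
    (h16 : a1 ≠ a6) (h23 : a2 ≠ a3) (h24 : a2 ≠ a4) (h25 : a2 ≠ a5) (h26 : a2 ≠ a6)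
    (h34 : a3 ≠ a4) (h35 : a3 ≠ a5) (h36 : a3 ≠ a6) (h45 : a4 ≠ a5) (h46 : a4 ≠ a6)
    (h56 : a5 ≠ a6)
    (m0 : a0 ∈ reachSet (GC r φ) σ r z) (m1 : a1 ∈ reachSet (GC r φ) σ r z)
    (m2 : a2 ∈ reachSet (GC r φ) σ r z) (m3 : a3 ∈ reachSet (GC r φ) σ r z)
    (m4 : a4 ∈ reachSet (GC r φ) σ r z) (m5 : a5 ∈ reachSet (GC r φ) σ r z)
    (m6 : a6 ∈ reachSet (GC r φ) σ r z) : False := by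
  apply no_seven hσ z ![a0, a1, a2, a3, a4, a5, a6]
  · intro k k' h
    fin_cases k <;> fin_cases k' <;>
      simp only [Matrix.cons_val_zero, Matrix.cons_val_one, Matrix.head_cons,
        Matrix.cons_val_two, Matrix.tail_cons, Matrix.cons_val_three,
        Matrix.cons_val_four, Matrix.cons_val', Matrix.cons_val_fin_one,
        Matrix.empty_val', Fin.isValue] at h ⊢ <;>
      first
        | rfl
        | (exact absurd h (by assumption))
        | (exact absurd h.symm (by assumption))
        | (exact absurd h (by simp_all))
  · intro k
    fin_cases k <;> assumption

/-- Overloading the minimum clique vertex: the 6 other clique vertices plus any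
reachable non-clique vertex give reach 7. -/
lemma overload_w (hr : 2 ≤ r) {σ : LinearOrder (VtxC r φ)} (hσ : colOrd (GC r φ) σ r ≤ 6)
    (t0 : Fin 7) (hmin : ∀ t, t ≠ t0 → olt σ (VtxC.w t0) (VtxC.w t))
    (e : VtxC r φ) (he : ∀ a, e ≠ VtxC.w a)
    (hmem : e ∈ reachSet (GC r φ) σ r (VtxC.w t0)) : False := by
  apply no_seven hσ (VtxC.w t0)
    (fun k => if h : (k : ℕ) < 6 then VtxC.w (t0.succAbove ⟨(k : ℕ), h⟩) else e)
  · intro k k' hkk'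
    by_cases h1 : (k : ℕ) < 6 <;> by_cases h2 : (k' : ℕ) < 6 <;>
      simp only [h1, h2, dif_pos, dif_neg, not_false_iff] at hkk'
    · simp only [VtxC.w.injEq] at hkk'
      have := Fin.succAbove_right_injective (p := t0) hkk'
      simp only [Fin.mk.injEq] at this
      exact Fin.ext this
    · exact absurd hkk'.symm (he _)
    · exact absurd hkk' (he _)
    · have : (k : ℕ) = 6 := by omega
      have : (k' : ℕ) = 6 := by omega
      apply Fin.ext
      omega
  · intro k
    by_cases h1 : (k : ℕ) < 6 <;> simp only [h1, dif_pos, dif_neg, not_false_iff]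
    · exact mem_reachSet_adj (by omega)
        (hmin _ (Fin.succAbove_ne t0 ⟨(k : ℕ), h1⟩))
        (adj_ww (Ne.symm (Fin.succAbove_ne t0 ⟨(k : ℕ), h1⟩)))
    · exact hmem

/-- Overloading a falsified literal vertex that lies below the whole clique. -/
lemma overload_x (hr : 2 ≤ r) {σ : LinearOrder (VtxC r φ)} (hσ : colOrd (GC r φ) σ r ≤ 6)
    {j : Fin φ.n} {b : Bool}
    (hyx : olt σ (VtxC.v j (!b)) (VtxC.v j b))
    (hw : ∀ t : Fin 7, 1 ≤ (t : ℕ) → olt σ (VtxC.v j b) (VtxC.w t))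
    (g : VtxC r φ) (hgw : ∀ a, g ≠ VtxC.w a)
    (hmem : g ∈ reachSet (GC r φ) σ r (VtxC.v j b)) : False := by
  have hvw : ∀ t : Fin 7, 1 ≤ (t : ℕ) → (t : ℕ) ≤ 6 →
      VtxC.w t ∈ reachSet (GC r φ) σ r (VtxC.v j b) := by
    intro t ht1 ht6
    have hx_t : olt σ (VtxC.v j b) (VtxC.w t) := hw t ht1
    by_cases hside : (b = true ∧ (t : ℕ) ≤ 3) ∨ (b = false ∧ 4 ≤ (t : ℕ))
    · -- directly adjacent
      refine mem_reachSet_adj (by omega) hx_t (adj_vw ?_)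
      rcases hside with ⟨hb, h3⟩ | ⟨hb, h4⟩
      · exact Or.inl ⟨hb, ht1, h3⟩
      · exact Or.inr ⟨hb, h4, ht6⟩
    · -- through the partner vertex
      have hside' : ((!b) = true ∧ 1 ≤ (t : ℕ) ∧ (t : ℕ) ≤ 3) ∨
          ((!b) = false ∧ 4 ≤ (t : ℕ) ∧ (t : ℕ) ≤ 6) := by
        cases b <;> simp_all <;> omega
      refine mem_reachSet_two hr hx_t hyx (adj_vv ?_).symm (adj_vw hside') (by simp)
      cases b <;> simp
  apply no_seven hσ (VtxC.v j b)
    (fun k => if h : (k : ℕ) < 6 then VtxC.w ⟨(k : ℕ) + 1, by omega⟩ else g)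
  · intro k k' hkk'
    by_cases h1 : (k : ℕ) < 6 <;> by_cases h2 : (k' : ℕ) < 6 <;>
      simp only [h1, h2, dif_pos, dif_neg, not_false_iff] at hkk'
    · simp only [VtxC.w.injEq, Fin.mk.injEq] at hkk'
      apply Fin.ext
      omega
    · exact absurd hkk'.symm (hgw _)
    · exact absurd hkk' (hgw _)
    · apply Fin.ext
      omega
  · intro k
    by_cases h1 : (k : ℕ) < 6 <;> simp only [h1, dif_pos, dif_neg, not_false_iff]
    · exact hvw ⟨(k : ℕ) + 1, by omega⟩ (by simp) (by simp; omega)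
    · exact hmem

/-- From a falsified literal vertex lying below its clause vertex, some non-clique
vertex further along the subdivided path is reachable. -/
lemma exists_g (hr : 2 ≤ r) (σ : LinearOrder (VtxC r φ)) (occ : Occ r φ)
    (hxu : olt σ (Q occ r) (Q occ 0)) :
    ∃ g : VtxC r φ, (∀ a, g ≠ VtxC.w a) ∧ g ∈ reachSet (GC r φ) σ r (Q occ r) := by
  classical
  set x := Q occ r with hx
  let K : Finset ℕ := (Finset.range r).filter (fun k => olt σ x (Q occ k))
  have h0K : 0 ∈ K := by
    simp only [K, Finset.mem_filter, Finset.mem_range]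
    exact ⟨by omega, hxu⟩
  set kg := K.max' ⟨0, h0K⟩ with hkg
  have hkgK : kg ∈ K := K.max'_mem _
  have hkg_r : kg < r := by
    have := hkgK
    simp only [K, Finset.mem_filter, Finset.mem_range] at this
    exact this.1
  have holt : olt σ x (Q occ kg) := by
    have := hkgK
    simp only [K, Finset.mem_filter] at this
    exact this.2
  obtain ⟨p, hp, hlen, hsup⟩ := exists_pathQ hr occ (a := kg) (b := r) (by omega) le_rfl
  refine ⟨Q occ kg, Q_ne_w occ kg, mem_reachSet holt p.reverse
    ((SimpleGraph.Walk.isPath_reverse_iff p).mpr hp) ?_ ?_⟩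
  · rw [SimpleGraph.Walk.length_reverse, hlen]
    omega
  · intro y hy hy1 hy2
    rw [SimpleGraph.Walk.support_reverse, List.mem_reverse] at hy
    obtain ⟨t, ht1, ht2, rfl⟩ := (hsup y).mp hy
    have htr : t ≠ r := fun h => hy1 (by rw [h])
    have htkg : t ≠ kg := fun h => hy2 (by rw [h])
    have htK : t ∉ K := by
      intro hmem
      exact absurd (K.le_max' t hmem) (by omega)
    have hnlt : ¬ olt σ x (Q occ t) := by
      intro hcon
      exact htK (by simp only [K, Finset.mem_filter, Finset.mem_range]; exact ⟨by omega, hcon⟩)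
    exact olt_resolve σ (fun h => hy1 h.symm) hnlt

/-- If some vertex on the subdivided path of `occ` beyond the clause vertex is above the
clause vertex, the first such vertex is reachable from the clause vertex. -/
lemma exists_f (hr : 2 ≤ r) (σ : LinearOrder (VtxC r φ)) (occ : Occ r φ)
    (hex : ∃ t, 1 ≤ t ∧ t ≤ r ∧ olt σ (Q occ 0) (Q occ t)) :
    ∃ t0, 1 ≤ t0 ∧ t0 ≤ r ∧ Q occ t0 ∈ reachSet (GC r φ) σ r (Q occ 0) := by
  classical
  set u := Q occ 0 with hu
  let T : Finset ℕ := (Finset.Icc 1 r).filter (fun t => olt σ u (Q occ t))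
  have hTne : T.Nonempty := by
    obtain ⟨t, h1, h2, h3⟩ := hex
    exact ⟨t, by simp only [T, Finset.mem_filter, Finset.mem_Icc]; exact ⟨⟨h1, h2⟩, h3⟩⟩
  set t0 := T.min' hTne with ht0def
  have ht0T : t0 ∈ T := T.min'_mem _
  have ht0a : 1 ≤ t0 ∧ t0 ≤ r := by
    have := ht0T
    simp only [T, Finset.mem_filter, Finset.mem_Icc] at this
    exact this.1
  have holt : olt σ u (Q occ t0) := by
    have := ht0T
    simp only [T, Finset.mem_filter] at this
    exact this.2
  obtain ⟨p, hp, hlen, hsup⟩ := exists_pathQ hr occ (a := 0) (b := t0) (by omega) ht0a.2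
  refine ⟨t0, ht0a.1, ht0a.2, mem_reachSet holt p hp (by omega) ?_⟩
  · intro y hy hy1 hy2
    obtain ⟨t, ht1, ht2, rfl⟩ := (hsup y).mp hy
    have ht01 : t ≠ 0 := fun h => hy1 (by rw [h])
    have htt0 : t ≠ t0 := fun h => hy2 (by rw [h])
    have htT : t ∉ T := by
      intro hmem
      exact absurd (T.min'_le t hmem) (by omega)
    have hnlt : ¬ olt σ u (Q occ t) := by
      intro hcon
      exact htT (by simp only [T, Finset.mem_filter, Finset.mem_Icc]; exact ⟨⟨by omega, by omega⟩, hcon⟩)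
    exact olt_resolve σ (fun h => hy1 h.symm) hnlt

/-- Overloading the clause vertex when all its clique neighbours are above it and every
subdivided path has a vertex above it. -/
lemma overload_u (hr : 2 ≤ r) {σ : LinearOrder (VtxC r φ)} (hσ : colOrd (GC r φ) σ r ≤ 6)
    (i : Fin φ.m)
    (hA1 : ∀ t : Fin 7, (GC r φ).Adj (.u i) (.w t) → olt σ (.u i) (.w t))
    (hcase : ∀ l (hl : l ∈ φ.clauses i),
      ∃ t, 1 ≤ t ∧ t ≤ r ∧ olt σ (Q (⟨i, ⟨l, hl⟩⟩ : Occ r φ) 0) (Q ⟨i, ⟨l, hl⟩⟩ t)) :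
    False := by
  have hwmem : ∀ t : Fin 7, (t : ℕ) ≤ 3 ∨ ((t : ℕ) = 4 ∧ (φ.clauses i).card = 2) →
      VtxC.w t ∈ reachSet (GC r φ) σ r (.u i) := by
    intro t ht
    have hadj := adj_uw (i := i) (r := r) ht
    exact mem_reachSet_adj (by omega) (hA1 t hadj) hadj
  have hfmem : ∀ l (hl : l ∈ φ.clauses i),
      ∃ t0, 1 ≤ t0 ∧ Q (⟨i, ⟨l, hl⟩⟩ : Occ r φ) t0 ∈ reachSet (GC r φ) σ r (.u i) := by
    intro l hl
    obtain ⟨t0, h1, h2, h3⟩ := exists_f hr σ ⟨i, ⟨l, hl⟩⟩ (hcase l hl)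
    rw [Q_zero] at h3
    exact ⟨t0, h1, h3⟩
  have hQQ : ∀ {l l' : Fin φ.n × Bool} (hl : l ∈ φ.clauses i) (hl' : l' ∈ φ.clauses i)
      {t t' : ℕ}, 1 ≤ t → 1 ≤ t' → l ≠ l' →
      (Q ⟨i, ⟨l, hl⟩⟩ t : VtxC r φ) ≠ Q ⟨i, ⟨l', hl'⟩⟩ t' := by
    intro l l' hl hl' t t' h1 h1' hne h
    have := Q_injO hr (by rfl) h1 h1' h
    exact hne (congrArg (fun o : Occ r φ => o.2.1) this)
  have hc := φ.clause_ge_two i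
  have hc' := φ.clause_le_three i
  rcases (by omega : (φ.clauses i).card = 2 ∨ (φ.clauses i).card = 3) with hcard | hcard
  · -- two literals
    obtain ⟨l1, l2, h12, hset⟩ := Finset.card_eq_two.mp hcard
    have hl1 : l1 ∈ φ.clauses i := by rw [hset]; simp
    have hl2 : l2 ∈ φ.clauses i := by rw [hset]; simp
    obtain ⟨t1, ht1, hm1⟩ := hfmem l1 hl1
    obtain ⟨t2, ht2, hm2⟩ := hfmem l2 hl2
    refine no_seven7 hσ (.u i) (.w 0) (.w 1) (.w 2) (.w 3) (.w 4)
      (Q ⟨i, ⟨l1, hl1⟩⟩ t1) (Q ⟨i, ⟨l2, hl2⟩⟩ t2)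
      (by simp) (by simp) (by simp) (by simp) (Ne.symm (Q_ne_w _ _ _)) (Ne.symm (Q_ne_w _ _ _))
      (by simp) (by simp) (by simp) (Ne.symm (Q_ne_w _ _ _)) (Ne.symm (Q_ne_w _ _ _))
      (by simp) (by simp) (Ne.symm (Q_ne_w _ _ _)) (Ne.symm (Q_ne_w _ _ _))
      (by simp) (Ne.symm (Q_ne_w _ _ _)) (Ne.symm (Q_ne_w _ _ _))
      (Ne.symm (Q_ne_w _ _ _)) (Ne.symm (Q_ne_w _ _ _))
      (hQQ hl1 hl2 ht1 ht2 h12)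
      (hwmem 0 (Or.inl (by decide))) (hwmem 1 (Or.inl (by decide))) (hwmem 2 (Or.inl (by decide)))
      (hwmem 3 (Or.inl (by decide))) (hwmem 4 (Or.inr ⟨rfl, hcard⟩)) hm1 hm2
  · -- three literals
    obtain ⟨l1, l2, l3, h12, h13, h23, hset⟩ := Finset.card_eq_three.mp hcard
    have hl1 : l1 ∈ φ.clauses i := by rw [hset]; simp
    have hl2 : l2 ∈ φ.clauses i := by rw [hset]; simp
    have hl3 : l3 ∈ φ.clauses i := by rw [hset]; simp
    obtain ⟨t1, ht1, hm1⟩ := hfmem l1 hl1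
    obtain ⟨t2, ht2, hm2⟩ := hfmem l2 hl2
    obtain ⟨t3, ht3, hm3⟩ := hfmem l3 hl3
    refine no_seven7 hσ (.u i) (.w 0) (.w 1) (.w 2) (.w 3)
      (Q ⟨i, ⟨l1, hl1⟩⟩ t1) (Q ⟨i, ⟨l2, hl2⟩⟩ t2) (Q ⟨i, ⟨l3, hl3⟩⟩ t3)
      (by simp) (by simp) (by simp) (Ne.symm (Q_ne_w _ _ _)) (Ne.symm (Q_ne_w _ _ _))
      (Ne.symm (Q_ne_w _ _ _))
      (by simp) (by simp) (Ne.symm (Q_ne_w _ _ _)) (Ne.symm (Q_ne_w _ _ _)) (Ne.symm (Q_ne_w _ _ _))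
      (by simp) (Ne.symm (Q_ne_w _ _ _)) (Ne.symm (Q_ne_w _ _ _)) (Ne.symm (Q_ne_w _ _ _))
      (Ne.symm (Q_ne_w _ _ _)) (Ne.symm (Q_ne_w _ _ _)) (Ne.symm (Q_ne_w _ _ _))
      (hQQ hl1 hl2 ht1 ht2 h12) (hQQ hl1 hl3 ht1 ht3 h13)
      (hQQ hl2 hl3 ht2 ht3 h23)
      (hwmem 0 (Or.inl (by decide))) (hwmem 1 (Or.inl (by decide))) (hwmem 2 (Or.inl (by decide)))
      (hwmem 3 (Or.inl (by decide))) hm1 hm2 hm3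

/-- Contradiction when the minimum clique vertex lies below both the clause vertex and a
falsified literal vertex. -/
lemma xcore_high (hr : 2 ≤ r) {σ : LinearOrder (VtxC r φ)} (hσ : colOrd (GC r φ) σ r ≤ 6)
    (t0 : Fin 7) (hmin : ∀ t, t ≠ t0 → olt σ (VtxC.w t0) (VtxC.w t))
    (i : Fin φ.m) {j : Fin φ.n} {b : Bool}
    (hyx : olt σ (VtxC.v j (!b)) (VtxC.v j b))
    (hmx : olt σ (VtxC.w t0) (VtxC.v j b))
    (hmu : olt σ (VtxC.w t0) (VtxC.u i)) : False := by
  by_cases hadj : (GC r φ).Adj (VtxC.v j b) (VtxC.w t0)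
  · exact overload_w hr hσ t0 hmin (VtxC.v j b) (by simp)
      (mem_reachSet_adj (by omega) hmx hadj.symm)
  · by_cases ht00 : (t0 : ℕ) = 0
    · have hadju : (GC r φ).Adj (VtxC.u i) (VtxC.w t0) := adj_uw (Or.inl (by omega))
      exact overload_w hr hσ t0 hmin (VtxC.u i) (by simp)
        (mem_reachSet_adj (by omega) hmu hadju.symm)
    · have ht7 : (t0 : ℕ) < 7 := t0.isLt
      rw [adj_vw_iff] at hadj
      have hyadj : (GC r φ).Adj (VtxC.v j (!b)) (VtxC.w t0) := by
        rw [adj_vw_iff]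
        cases b with
        | false =>
          have harith : ¬(4 ≤ (t0 : ℕ) ∧ (t0 : ℕ) ≤ 6) :=
            fun hc => hadj (Or.inr ⟨rfl, hc.1, hc.2⟩)
          have h3 : (t0 : ℕ) ≤ 3 := by
            by_contra hc
            exact harith ⟨by omega, by omega⟩
          exact Or.inl ⟨rfl, by omega, h3⟩
        | true =>
          have harith : ¬(1 ≤ (t0 : ℕ) ∧ (t0 : ℕ) ≤ 3) :=
            fun hc => hadj (Or.inl ⟨rfl, hc.1, hc.2⟩)
          have h4 : 4 ≤ (t0 : ℕ) := by
            by_contra hc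
            exact harith ⟨by omega, by omega⟩
          exact Or.inr ⟨rfl, h4, by omega⟩
      by_cases hym : olt σ (VtxC.v j (!b)) (VtxC.w t0)
      · exact overload_w hr hσ t0 hmin (VtxC.v j b) (by simp)
          (mem_reachSet_two hr hmx hym hyadj.symm (adj_vv (by cases b <;> simp)) (by simp))
      · have hwy : olt σ (VtxC.w t0) (VtxC.v j (!b)) := olt_resolve σ (by simp) hym
        exact overload_w hr hσ t0 hmin (VtxC.v j (!b)) (by simp)
          (mem_reachSet_adj (by omega) hwy hyadj.symm)

/-- Main argument: a witnessing order yields a satisfying assignment. -/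
lemma sat_of_colOrd (hr : 2 ≤ r) (σ : LinearOrder (VtxC r φ))
    (hσ : colOrd (GC r φ) σ r ≤ 6) :
    φ.Sat fun j => @decide (σ.lt (VtxC.v j true) (VtxC.v j false)) (σ.toDecidableLT _ _) := by
  intro i
  by_contra hA
  push_neg at hA
  have hfal : ∀ l : Fin φ.n × Bool, l ∈ φ.clauses i →
      olt σ (VtxC.v l.1 (!l.2)) (VtxC.v l.1 l.2) := by
    intro l hl
    have hd := hA l hl
    obtain ⟨j, b⟩ := l
    simp only at hd ⊢
    cases b with
    | false =>
      have hdt := Bool.ne_false_iff.mp hd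
      have hP := of_decide_eq_true hdt
      exact hP
    | true =>
      have hdf := Bool.eq_false_iff.mpr hd
      have hnP : ¬ σ.lt (VtxC.v j true) (VtxC.v j false) := of_decide_eq_false hdf
      exact olt_resolve σ (by simp) hnP
  obtain ⟨t0, hmin⟩ := exists_min_w σ
  have hne : ∃ l, l ∈ φ.clauses i := by
    have h2 := φ.clause_ge_two i
    have hpos : 0 < (φ.clauses i).card := by omega
    rcases Finset.card_pos.mp hpos with ⟨l, hl⟩
    exact ⟨l, hl⟩
  by_cases hcase : ∀ l (hl : l ∈ φ.clauses i),
      ∃ t, 1 ≤ t ∧ t ≤ r ∧ olt σ (Q ⟨i, ⟨l, hl⟩⟩ 0) (Q ⟨i, ⟨l, hl⟩⟩ t : VtxC r φ)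
  · by_cases hA1 : ∀ t : Fin 7, (GC r φ).Adj (VtxC.u i) (VtxC.w t) → olt σ (VtxC.u i) (VtxC.w t)
    · exact overload_u hr hσ i hA1 hcase
    · push_neg at hA1
      obtain ⟨tw, hadj, hnlt⟩ := hA1
      have hwu : olt σ (VtxC.w tw) (VtxC.u i) := olt_resolve σ (by simp) hnlt
      have hmu : olt σ (VtxC.w t0) (VtxC.u i) := by
        by_cases h : tw = t0
        · rw [← h]; exact hwu
        · exact olt_trans σ (hmin tw h) hwu
      obtain ⟨l, hl⟩ := hne
      have hyx := hfal l hl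
      by_cases hxm : olt σ (VtxC.v l.1 l.2) (VtxC.w t0)
      · have hw : ∀ t : Fin 7, 1 ≤ (t : ℕ) → olt σ (VtxC.v l.1 l.2) (VtxC.w t) := by
          intro t ht
          by_cases h : t = t0
          · rw [h]; exact hxm
          · exact olt_trans σ hxm (hmin t h)
        obtain ⟨g, hgw, hgm⟩ := exists_g hr σ ⟨i, ⟨l, hl⟩⟩
          (by rw [Q_last hr, Q_zero]; exact olt_trans σ hxm hmu)
        rw [Q_last hr] at hgm
        exact overload_x hr hσ hyx hw g hgw hgm
      · have hmx : olt σ (VtxC.w t0) (VtxC.v l.1 l.2) := olt_resolve σ (by simp) hxm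
        exact xcore_high hr hσ t0 hmin i hyx hmx hmu
  · push_neg at hcase
    obtain ⟨l, hl, hlow⟩ := hcase
    have hyx := hfal l hl
    have hxu : olt σ (Q (⟨i, ⟨l, hl⟩⟩ : Occ r φ) r) (Q ⟨i, ⟨l, hl⟩⟩ 0) := by
      have h1 : ¬ olt σ (Q (⟨i, ⟨l, hl⟩⟩ : Occ r φ) 0) (Q ⟨i, ⟨l, hl⟩⟩ r) :=
        hlow r (by omega) le_rfl
      refine olt_resolve σ (fun h => ?_) h1
      have := Q_inj hr (⟨i, ⟨l, hl⟩⟩ : Occ r φ) (by omega) le_rfl h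
      omega
    obtain ⟨g, hgw, hgm⟩ := exists_g hr σ ⟨i, ⟨l, hl⟩⟩ hxu
    rw [Q_last hr] at hgm
    rw [Q_last hr, Q_zero] at hxu
    by_cases hall : ∀ t : Fin 7, 1 ≤ (t : ℕ) → olt σ (VtxC.v l.1 l.2) (VtxC.w t)
    · exact overload_x hr hσ hyx hall g hgw hgm
    · push_neg at hall
      obtain ⟨tw, htw1, hnlt⟩ := hall
      have hwx : olt σ (VtxC.w tw) (VtxC.v l.1 l.2) := olt_resolve σ (by simp) hnlt
      have hmx : olt σ (VtxC.w t0) (VtxC.v l.1 l.2) := by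
        by_cases h : tw = t0
        · rw [← h]; exact hwx
        · exact olt_trans σ (hmin tw h) hwx
      exact xcore_high hr hσ t0 hmin i hyx hmx (olt_trans σ hmx hxu)

end Aux


/-- If (for `r ≥ 2`) the reduction graph `G(φ)` has `r`-coloring number at most 6, then
`φ` has a satisfying assignment; specifically, for any witnessing order `σ`, the
assignment setting `x_j` true iff `v_j <_σ v'_j` satisfies `φ`. -/
theorem colr_le_six_implies_sat (r : ℕ) (hr : 2 ≤ r) (φ : TC3SAT)
    (h : colNum (GC r φ) r ≤ 6) :
    φ.Satisfiable ∧
      ∀ σ : LinearOrder (VtxC r φ), colOrd (GC r φ) σ r ≤ 6 →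
        φ.Sat fun j =>
          @decide (σ.lt (VtxC.v j true) (VtxC.v j false)) (σ.toDecidableLT _ _) := by
  constructor
  · have e := Fintype.equivFin (VtxC r φ)
    have hnel : Nonempty (LinearOrder (VtxC r φ)) := ⟨LinearOrder.lift' (⇑e) e.injective⟩
    have hne : (Set.range fun σ : LinearOrder (VtxC r φ) => colOrd (GC r φ) σ r).Nonempty :=
      Set.range_nonempty _
    have hmem := Nat.sInf_mem hne
    obtain ⟨σ0, hσ0⟩ := hmem
    have hcol : colOrd (GC r φ) σ0 r ≤ 6 := by
      have h6 : (fun σ : LinearOrder (VtxC r φ) => colOrd (GC r φ) σ r) σ0 ≤ 6 := by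
        rw [hσ0]
        exact h
      exact h6
    exact ⟨_, Aux.sat_of_colOrd hr σ0 hcol⟩
  · intro σ hσ
    exact Aux.sat_of_colOrd hr σ hσ
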